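/- Let R be a commutative ring such that Prm(R) is sober. Then for every maximal ideal m of R, the space Prm(R_m) of primary ideals of the localization R_m is sober. -/

import Mathlib

/-- The coarse lower topology on the set of ideals of a commutative ring. -/
def coarseLowerTopology (R : Type*) [CommRing R] : TopologicalSpace (Ideal R) :=
  TopologicalSpace.generateFrom {U : Set (Ideal R) | ∃ a : Ideal R, U = {i : Ideal R | a ≤ i}ᶜ}

section Aux

variable {S : Type*} [CommRing S]

/-- Opens in the coarse lower topology are downward closed. -/
lemma clt_down {U : Set (Ideal S)}
    (hU : TopologicalSpace.GenerateOpen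
      {U : Set (Ideal S) | ∃ a : Ideal S, U = {i : Ideal S | a ≤ i}ᶜ} U) :
    ∀ ⦃a b : Ideal S⦄, a ≤ b → b ∈ U → a ∈ U := by
  induction hU with
  | basic V hV =>
      obtain ⟨c, rfl⟩ := hV
      intro a b hab hb hc
      exact hb (hc.trans hab)
  | univ => intro a b _ _; trivial
  | inter U V _ _ ihU ihV => exact fun a b hab hb => ⟨ihU hab hb.1, ihV hab hb.2⟩
  | sUnion K _ ih => rintro a b hab ⟨V, hV, hb⟩; exact ⟨V, hV, ih V hV hab hb⟩

lemma clt_isClosed_up (a : Ideal S) :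
    letI := coarseLowerTopology S
    IsClosed {i : Ideal S | a ≤ i} := by
  letI := coarseLowerTopology S
  rw [← isOpen_compl_iff]
  exact TopologicalSpace.GenerateOpen.basic _ ⟨a, rfl⟩

lemma clt_mem_closure_singleton {a b : Ideal S} :
    letI := coarseLowerTopology S
    (b ∈ closure {a} ↔ a ≤ b) := by
  letI := coarseLowerTopology S
  constructor
  · intro hb
    exact closure_minimal (Set.singleton_subset_iff.2 (le_refl a)) (clt_isClosed_up a) hb
  · intro hab
    rw [mem_closure_iff]
    intro U hU hbU
    exact ⟨a, clt_down hU hab hbU, rfl⟩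

lemma prm_mem_closure_singleton (x y : {a : Ideal S | a.IsPrimary}) :
    letI := coarseLowerTopology S
    (y ∈ closure {x} ↔ x.1 ≤ y.1) := by
  letI := coarseLowerTopology S
  rw [closure_subtype, Set.image_singleton]
  exact clt_mem_closure_singleton

lemma isPrimary_comap {A B : Type*} [CommRing A] [CommRing B] (f : A →+* B) {I : Ideal B}
    (hI : I.IsPrimary) : (I.comap f).IsPrimary := by
  rw [Ideal.isPrimary_iff] at hI ⊢
  constructor
  · intro h
    have h1 : (1 : B) ∈ I := by
      have := (Ideal.eq_top_iff_one _).mp h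
      simpa using this
    exact hI.1 ((Ideal.eq_top_iff_one _).mpr h1)
  · intro x y hxy
    have : f x * f y ∈ I := by
      have : f (x * y) ∈ I := hxy
      simpa [map_mul] using this
    rcases hI.2 this with h | h
    · exact Or.inl h
    · obtain ⟨n, hn⟩ := h
      exact Or.inr ⟨n, show f (y ^ n) ∈ I by simpa [map_pow] using hn⟩

end Aux

section Loc

variable {R : Type*} [CommRing R] (m : Ideal R)

/-- comap of a primary (in particular proper) ideal of the localization lands below `m`. -/
lemma comap_le_of_primary [m.IsPrime] (hm : m.IsMaximal) {t : Ideal (Localization.AtPrime m)}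
    (ht : t.IsPrimary) : t.comap (algebraMap R (Localization.AtPrime m)) ≤ m := by
  intro x hx
  by_contra hxm
  have hu : IsUnit (algebraMap R (Localization.AtPrime m) x) :=
    IsLocalization.map_units _ (⟨x, hxm⟩ : m.primeCompl)
  exact (Ideal.isPrimary_iff.mp ht).1 (t.eq_top_of_isUnit_mem hx hu)

lemma comap_map_of_primary [m.IsPrime] {p : Ideal R} (hp : p.IsPrimary) (hpm : p ≤ m) :
    (p.map (algebraMap R (Localization.AtPrime m))).comap
      (algebraMap R (Localization.AtPrime m)) = p := by
  have hrad : p.radical ≤ m := by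
    have := Ideal.radical_mono hpm
    rwa [(‹m.IsPrime›).radical] at this
  refine le_antisymm ?_ Ideal.le_comap_map
  intro a ha
  rw [Ideal.mem_comap] at ha
  obtain ⟨⟨b, s⟩, hbs⟩ := (IsLocalization.mem_map_algebraMap_iff m.primeCompl _).1 ha
  rw [← map_mul] at hbs
  obtain ⟨c, hc⟩ := (IsLocalization.eq_iff_exists m.primeCompl (Localization.AtPrime m)).1 hbs
  have hmem : a * ((c : R) * (s : R)) ∈ p := by
    have : (c : R) * ((b : R)) ∈ p := p.mul_mem_left _ b.2
    rw [← hc] at this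
    convert this using 1
    ring
  rcases (Ideal.isPrimary_iff.mp hp).2 hmem with h | h
  · exact h
  · exact absurd (hrad h) ((c * s).2)

lemma map_isPrimary [m.IsPrime] {p : Ideal R} (hp : p.IsPrimary) (hpm : p ≤ m) :
    (p.map (algebraMap R (Localization.AtPrime m))).IsPrimary := by
  set L := Localization.AtPrime m
  set φ := algebraMap R L
  rw [Ideal.isPrimary_iff]
  constructor
  · intro h
    have := comap_map_of_primary m hp hpm
    rw [h, Ideal.comap_top] at this
    exact (Ideal.isPrimary_iff.mp hp).1 this.symm
  · intro x y hxy
    obtain ⟨⟨a, s⟩, rfl⟩ := IsLocalization.mk'_surjective m.primeCompl x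
    obtain ⟨⟨b, t⟩, rfl⟩ := IsLocalization.mk'_surjective m.primeCompl y
    rw [← IsLocalization.mk'_mul] at hxy
    obtain ⟨u, hu, hab⟩ := (IsLocalization.mk'_mem_map_algebraMap_iff m.primeCompl _ p _ _).1 hxy
    have hmem : (u * a) * b ∈ p := by
      convert hab using 1; ring
    rcases (Ideal.isPrimary_iff.mp hp).2 hmem with h | h
    · left
      exact (IsLocalization.mk'_mem_map_algebraMap_iff m.primeCompl _ p _ _).2
        ⟨u, hu, h⟩
    · right
      obtain ⟨n, hn⟩ := h
      refine ⟨n, ?_⟩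
      rw [← IsLocalization.mk'_pow]
      exact (IsLocalization.mk'_mem_map_algebraMap_iff m.primeCompl _ p _ _).2
        ⟨1, Submonoid.one_mem _, by simpa using hn⟩

/-- The localization's coarse lower topology is induced by comap. -/
lemma clt_localization_induced [m.IsPrime] :
    coarseLowerTopology (Localization.AtPrime m) =
      TopologicalSpace.induced
        (fun J : Ideal (Localization.AtPrime m) =>
          J.comap (algebraMap R (Localization.AtPrime m)))
        (coarseLowerTopology R) := by
  set L := Localization.AtPrime m
  set φ := algebraMap R L
  rw [coarseLowerTopology, coarseLowerTopology, induced_generateFrom_eq]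
  congr 1
  ext U
  constructor
  · rintro ⟨c, rfl⟩
    refine ⟨{i : Ideal R | c.comap φ ≤ i}ᶜ, ⟨c.comap φ, rfl⟩, ?_⟩
    ext J
    simp only [Set.preimage_compl, Set.mem_compl_iff, Set.mem_preimage, Set.mem_setOf_eq]
    rw [← Ideal.map_le_iff_le_comap, IsLocalization.map_comap m.primeCompl L]
  · rintro ⟨V, ⟨b, rfl⟩, rfl⟩
    refine ⟨b.map φ, ?_⟩
    ext J
    simp only [Set.preimage_compl, Set.mem_compl_iff, Set.mem_preimage, Set.mem_setOf_eq]
    rw [Ideal.map_le_iff_le_comap]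

end Loc

/-- If the space of primary ideals of `R` is sober, then so is the space of primary
ideals of every localization of `R` at a maximal ideal. -/
theorem prm_localization_sober {R : Type*} [CommRing R]
    (h : letI := coarseLowerTopology R; QuasiSober {a : Ideal R | a.IsPrimary})
    (m : Ideal R) (hm : m.IsMaximal) :
    letI := hm.isPrime
    letI := coarseLowerTopology (Localization.AtPrime m)
    QuasiSober {a : Ideal (Localization.AtPrime m) | a.IsPrimary} := by
  letI := hm.isPrime
  letI := coarseLowerTopology R
  letI := coarseLowerTopology (Localization.AtPrime m)
  set L := Localization.AtPrime m with hL
  set φ := algebraMap R L with hφ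
  let f : {a : Ideal L | a.IsPrimary} → {a : Ideal R | a.IsPrimary} :=
    fun q => ⟨q.1.comap φ, isPrimary_comap φ q.2⟩
  have hind : Topology.IsInducing f := by
    refine ⟨?_⟩
    show TopologicalSpace.induced Subtype.val (coarseLowerTopology L) =
      TopologicalSpace.induced f (TopologicalSpace.induced Subtype.val (coarseLowerTopology R))
    rw [clt_localization_induced m, induced_compose, induced_compose]
    rfl
  refine ⟨fun {T} hT hTc => ?_⟩
  obtain ⟨p, hp⟩ := h.sober ((hT.image f hind.continuous.continuousOn).closure) isClosed_closure
  -- p specializes to every element of f '' T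
  have hspec : ∀ t ∈ T, p.1 ≤ (f t).1 := by
    intro t ht
    have : f t ∈ closure {p} := by
      rw [hp]
      exact subset_closure ⟨t, ht, rfl⟩
    exact (prm_mem_closure_singleton p (f t)).1 this
  obtain ⟨t0, ht0⟩ := hT.nonempty
  have hpm : p.1 ≤ m := (hspec t0 ht0).trans (comap_le_of_primary m hm t0.2)
  have hq : (p.1.map φ).IsPrimary := map_isPrimary m p.2 hpm
  refine ⟨⟨p.1.map φ, hq⟩, ?_⟩
  have hfq : f ⟨p.1.map φ, hq⟩ = p := Subtype.ext (comap_map_of_primary m p.2 hpm)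
  have hqT : (⟨p.1.map φ, hq⟩ : {a : Ideal L | a.IsPrimary}) ∈ T := by
    have := hind.closure_eq_preimage_closure_image T
    rw [hTc.closure_eq] at this
    rw [this]
    show f _ ∈ closure (f '' T)
    rw [hfq, ← hp]
    exact subset_closure rfl
  refine le_antisymm (closure_minimal (Set.singleton_subset_iff.2 hqT) hTc) ?_
  intro t ht
  rw [prm_mem_closure_singleton]
  show p.1.map φ ≤ t.1
  rw [Ideal.map_le_iff_le_comap]
  exact hspec t ht
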